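/- (Rotation estimation convergence) Let V be a finite set with symmetric adjacency relation Adj, let R̃ : V × V → SO(3) be pairwise consistent relative rotation measurements (R̃(j,i) = R̃(i,j)ᵀ for adjacent i, j), and let ε > 0. Let R_i : [0,∞) → ℝ^{3×3} (i ∈ V) be curves with R_i(t) ∈ SO(3) and θ(R_i(t)ᵀ R_j(t) R̃(i,j)ᵀ) ∈ (0, π/2 − ε] for all adjacent i, j and all t ≥ 0, satisfying the GeoD rotation dynamics: at every t ≥ 0, R_i has derivative R_i(t) · ( Σ_{j: Adj(i,j)} Log(R_i(t)ᵀ R_j(t) R̃(i,j)ᵀ) ). Then the estimates converge to the set of equilibria: for every i ∈ V, the rotational control ω_i(t) := Σ_{j: Adj(i,j)} (Log(R_i(t)ᵀ R_j(t) R̃(i,j)ᵀ))^∨ tends to 0 as t → ∞ (equivalently, the derivative of each R_i tends to the zero matrix). -/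

import Mathlib

open Matrix Real Filter

/-- The vee map, inverse of the hat map on skew-symmetric matrices. -/
def vee (S : Matrix (Fin 3) (Fin 3) ℝ) : EuclideanSpace ℝ (Fin 3) :=
  WithLp.toLp 2 ![S 2 1, S 0 2, S 1 0]

/-- `SO(3)`: real 3×3 matrices `R` with `RᵀR = I` and `det R = 1`. -/
def SO3 (R : Matrix (Fin 3) (Fin 3) ℝ) : Prop :=
  Rᵀ * R = 1 ∧ R.det = 1

/-- The rotation angle `θ(R) = arccos((tr(R) − 1)/2)`. -/
noncomputable def rotAngle (R : Matrix (Fin 3) (Fin 3) ℝ) : ℝ :=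
  Real.arccos ((Matrix.trace R - 1) / 2)

/-- The matrix logarithm `Log(R) = (θ/(2 sin θ))(R − Rᵀ)` for `θ ≠ 0`, and `0` for `θ = 0`. -/
noncomputable def matLog (R : Matrix (Fin 3) (Fin 3) ℝ) : Matrix (Fin 3) (Fin 3) ℝ :=
  if rotAngle R = 0 then 0
  else (rotAngle R / (2 * Real.sin (rotAngle R))) • (R - Rᵀ)

namespace GeoD

lemma so3_mulT {A : Matrix (Fin 3) (Fin 3) ℝ} (h : SO3 A) : A * Aᵀ = 1 :=
  mul_eq_one_comm.mp h.1

lemma so3_transpose {A : Matrix (Fin 3) (Fin 3) ℝ} (h : SO3 A) : SO3 Aᵀ := by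
  refine ⟨by simpa using so3_mulT h, by simpa using h.2⟩

lemma so3_mul {A B : Matrix (Fin 3) (Fin 3) ℝ} (hA : SO3 A) (hB : SO3 B) : SO3 (A * B) := by
  constructor
  · rw [transpose_mul, Matrix.mul_assoc, ← Matrix.mul_assoc Aᵀ, hA.1, Matrix.one_mul, hB.1]
  · rw [det_mul, hA.2, hB.2, one_mul]

lemma so3_entry {A : Matrix (Fin 3) (Fin 3) ℝ} (h : SO3 A) (p q : Fin 3) : |A p q| ≤ 1 := by
  have h1 : (Aᵀ * A) q q = 1 := by rw [h.1]; simp [Matrix.one_apply]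
  have hsum : ∑ k, A k q * A k q = 1 := by
    simpa [Matrix.mul_apply] using h1
  have hle : A p q * A p q ≤ 1 := by
    rw [← hsum]
    exact Finset.single_le_sum (fun k _ => mul_self_nonneg (A k q)) (Finset.mem_univ p)
  exact abs_le_one_iff_mul_self_le_one.mpr hle

lemma so3_adjugate {A : Matrix (Fin 3) (Fin 3) ℝ} (h : SO3 A) : adjugate A = Aᵀ := by
  have h2 := Matrix.adjugate_mul A
  rw [h.2, one_smul] at h2
  calc adjugate A = adjugate A * (A * Aᵀ) := by rw [so3_mulT h, Matrix.mul_one]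
    _ = (adjugate A * A) * Aᵀ := by rw [Matrix.mul_assoc]
    _ = Aᵀ := by rw [h2, Matrix.one_mul]

lemma trace_sq_generic (A : Matrix (Fin 3) (Fin 3) ℝ) :
    trace (A * A) = trace A ^ 2 - 2 * trace (adjugate A) := by
  rw [Matrix.adjugate_fin_three]
  simp [Matrix.trace, Matrix.mul_apply, Fin.sum_univ_three, Matrix.diag]
  ring

lemma so3_trace_sq {A : Matrix (Fin 3) (Fin 3) ℝ} (h : SO3 A) :
    trace (A * A) = trace A ^ 2 - 2 * trace A := by
  rw [trace_sq_generic, so3_adjugate h, trace_transpose]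

/-- Sum of squares of entries of the skew part of `Q ∈ SO(3)`. -/
lemma so3_skew_sq {Q : Matrix (Fin 3) (Fin 3) ℝ} (h : SO3 Q) :
    ∑ p, ∑ q, ((Q - Qᵀ) p q)^2 = 8 - 2 * (trace Q - 1)^2 := by
  have h1 : trace (Qᵀ * Q) = 3 := by rw [h.1]; simp [Matrix.trace, Matrix.one_apply, Fin.sum_univ_three, Matrix.diag]
  have h2 := so3_trace_sq h
  have e1 : ∑ p, ∑ q, ((Q - Qᵀ) p q)^2
      = 2 * trace (Qᵀ * Q) - 2 * trace (Q * Q) := by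
    simp [Matrix.trace, Matrix.mul_apply, Fin.sum_univ_three, Matrix.diag, Matrix.sub_apply,
      Matrix.transpose_apply]
    ring
  rw [e1, h1, h2]; ring


/-- All entries bounded by `b`. -/
def EB (A : Matrix (Fin 3) (Fin 3) ℝ) (b : ℝ) : Prop := ∀ p q, |A p q| ≤ b

lemma EB.nonneg {A b} (h : EB A b) : 0 ≤ b := le_trans (abs_nonneg _) (h 0 0)

lemma EB.mul {A B : Matrix (Fin 3) (Fin 3) ℝ} {a b : ℝ} (hA : EB A a) (hB : EB B b) :
    EB (A * B) (3 * (a * b)) := by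
  intro p q
  have : |∑ k, A p k * B k q| ≤ ∑ k : Fin 3, a * b := by
    refine le_trans (Finset.abs_sum_le_sum_abs _ _) ?_
    refine Finset.sum_le_sum fun k _ => ?_
    rw [abs_mul]
    exact mul_le_mul (hA p k) (hB k q) (abs_nonneg _) hA.nonneg
  simpa [Matrix.mul_apply, Fin.sum_univ_three] using this

lemma EB.transpose {A : Matrix (Fin 3) (Fin 3) ℝ} {a : ℝ} (hA : EB A a) : EB Aᵀ a :=
  fun p q => hA q p

lemma EB.sub {A B : Matrix (Fin 3) (Fin 3) ℝ} {a b : ℝ} (hA : EB A a) (hB : EB B b) :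
    EB (A - B) (a + b) := fun p q => by
  simpa [Matrix.sub_apply] using (abs_sub _ _).trans (add_le_add (hA p q) (hB p q))

lemma EB.add {A B : Matrix (Fin 3) (Fin 3) ℝ} {a b : ℝ} (hA : EB A a) (hB : EB B b) :
    EB (A + B) (a + b) := fun p q => by
  simpa [Matrix.add_apply] using (abs_add_le _ _).trans (add_le_add (hA p q) (hB p q))

lemma EB.smul {A : Matrix (Fin 3) (Fin 3) ℝ} {a : ℝ} (c : ℝ) (hA : EB A a) :
    EB (c • A) (|c| * a) := fun p q => by
  simp only [Matrix.smul_apply, smul_eq_mul, abs_mul]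
  exact mul_le_mul_of_nonneg_left (hA p q) (abs_nonneg c)

lemma EB.neg {A : Matrix (Fin 3) (Fin 3) ℝ} {a : ℝ} (hA : EB A a) : EB (-A) a :=
  fun p q => by simpa using hA p q

lemma EB.sum {ι : Type*} (s : Finset ι) (A : ι → Matrix (Fin 3) (Fin 3) ℝ) {a : ℝ}
    (ha : 0 ≤ a) (hA : ∀ i ∈ s, EB (A i) a) : EB (∑ i ∈ s, A i) (s.card * a) := by
  intro p q
  have e0 : (∑ i ∈ s, A i) p q = ∑ i ∈ s, A i p q := by simp [Matrix.sum_apply]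
  rw [e0]
  calc |∑ i ∈ s, A i p q|
      ≤ ∑ i ∈ s, |A i p q| := Finset.abs_sum_le_sum_abs _ _
    _ ≤ ∑ i ∈ s, a := Finset.sum_le_sum fun i hi => hA i hi p q
    _ = s.card * a := by rw [Finset.sum_const, nsmul_eq_mul]

lemma EB.mono {A : Matrix (Fin 3) (Fin 3) ℝ} {a b : ℝ} (hA : EB A a) (h : a ≤ b) : EB A b :=
  fun p q => (hA p q).trans h

lemma trace_abs_le {A B : Matrix (Fin 3) (Fin 3) ℝ} {a b : ℝ} (hA : EB A a) (hB : EB B b) :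
    |trace (A * B)| ≤ 9 * (a * b) := by
  have : |∑ p : Fin 3, ∑ k : Fin 3, A p k * B k p| ≤ ∑ p : Fin 3, ∑ k : Fin 3, a * b := by
    refine le_trans (Finset.abs_sum_le_sum_abs _ _) (Finset.sum_le_sum fun p _ => ?_)
    refine le_trans (Finset.abs_sum_le_sum_abs _ _) (Finset.sum_le_sum fun k _ => ?_)
    rw [abs_mul]; exact mul_le_mul (hA p k) (hB k p) (abs_nonneg _) hA.nonneg
  have e : trace (A * B) = ∑ p : Fin 3, ∑ k : Fin 3, A p k * B k p := by
    simp [Matrix.trace, Matrix.mul_apply, Matrix.diag]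
  rw [e]
  calc _ ≤ ∑ p : Fin 3, ∑ k : Fin 3, a * b := this
    _ = 9 * (a * b) := by simp [Fin.sum_univ_three]; ring

/-- entrywise derivative of a matrix-valued curve -/
def HMD (A : ℝ → Matrix (Fin 3) (Fin 3) ℝ) (A' : Matrix (Fin 3) (Fin 3) ℝ) (t : ℝ) : Prop :=
  ∀ p q, HasDerivAt (fun s => A s p q) (A' p q) t

lemma HMD.mul {A B : ℝ → Matrix (Fin 3) (Fin 3) ℝ} {A' B' : Matrix (Fin 3) (Fin 3) ℝ} {t : ℝ}
    (hA : HMD A A' t) (hB : HMD B B' t) :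
    HMD (fun s => A s * B s) (A' * B t + A t * B') t := by
  intro p q
  have : HasDerivAt (fun s => ∑ k, A s p k * B s k q)
      (∑ k, (A' p k * B t k q + A t p k * B' k q)) t :=
    HasDerivAt.fun_sum fun k _ => ((hA p k).fun_mul (hB k q))
  have e : ∀ s, (A s * B s) p q = ∑ k, A s p k * B s k q := fun s => by
    simp [Matrix.mul_apply]
  have e2 : (A' * B t + A t * B') p q = ∑ k, (A' p k * B t k q + A t p k * B' k q) := by
    simp [Matrix.add_apply, Matrix.mul_apply, Finset.sum_add_distrib]
  simp only [e, e2]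
  exact this

lemma HMD.transpose {A : ℝ → Matrix (Fin 3) (Fin 3) ℝ} {A' : Matrix (Fin 3) (Fin 3) ℝ} {t : ℝ}
    (hA : HMD A A' t) : HMD (fun s => (A s)ᵀ) A'ᵀ t := fun p q => hA q p

lemma HMD.const (C : Matrix (Fin 3) (Fin 3) ℝ) (t : ℝ) : HMD (fun _ => C) 0 t := fun p q => by
  simpa using hasDerivAt_const t (C p q)

lemma HMD.mul_const {A : ℝ → Matrix (Fin 3) (Fin 3) ℝ} {A' : Matrix (Fin 3) (Fin 3) ℝ} {t : ℝ}
    (hA : HMD A A' t) (C : Matrix (Fin 3) (Fin 3) ℝ) :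
    HMD (fun s => A s * C) (A' * C) t := by
  have := hA.mul (HMD.const C t)
  simpa using this

lemma HMD.sum {ι : Type*} {s : Finset ι} {A : ι → ℝ → Matrix (Fin 3) (Fin 3) ℝ}
    {A' : ι → Matrix (Fin 3) (Fin 3) ℝ} {t : ℝ} (h : ∀ i ∈ s, HMD (A i) (A' i) t) :
    HMD (fun x => ∑ i ∈ s, A i x) (∑ i ∈ s, A' i) t := by
  intro p q
  have : HasDerivAt (fun x => ∑ i ∈ s, A i x p q) (∑ i ∈ s, A' i p q) t :=
    HasDerivAt.fun_sum fun i hi => h i hi p q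
  simpa only [Matrix.sum_apply] using this

lemma HMD.sub {A B : ℝ → Matrix (Fin 3) (Fin 3) ℝ} {A' B' : Matrix (Fin 3) (Fin 3) ℝ} {t : ℝ}
    (hA : HMD A A' t) (hB : HMD B B' t) : HMD (fun s => A s - B s) (A' - B') t := fun p q => by
  simpa [Matrix.sub_apply] using (hA p q).fun_sub (hB p q)

lemma HMD.smul {f : ℝ → ℝ} {f' : ℝ} {A : ℝ → Matrix (Fin 3) (Fin 3) ℝ}
    {A' : Matrix (Fin 3) (Fin 3) ℝ} {t : ℝ} (hf : HasDerivAt f f' t) (hA : HMD A A' t) :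
    HMD (fun s => f s • A s) (f' • A t + f t • A') t := fun p q => by
  simpa [Matrix.smul_apply, Matrix.add_apply] using (hf.fun_mul (hA p q))

lemma HMD.trace {A : ℝ → Matrix (Fin 3) (Fin 3) ℝ} {A' : Matrix (Fin 3) (Fin 3) ℝ} {t : ℝ}
    (hA : HMD A A' t) : HasDerivAt (fun s => trace (A s)) (trace A') t := by
  have : HasDerivAt (fun s => ∑ p, A s p p) (∑ p, A' p p) t :=
    HasDerivAt.fun_sum fun p _ => hA p p
  simpa [Matrix.trace, Matrix.diag] using this


/-- MVT upper slope bound. -/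
lemma slope_le {f g : ℝ → ℝ} {a b C : ℝ} (hab : a < b)
    (hf : ∀ t ∈ Set.Icc a b, HasDerivAt f (g t) t)
    (hg : ∀ t ∈ Set.Ioo a b, g t ≤ C) : f b - f a ≤ C * (b - a) := by
  obtain ⟨c, hc, hc2⟩ := exists_hasDerivAt_eq_slope f g hab
    (fun t ht => (hf t ht).continuousAt.continuousWithinAt)
    (fun t ht => hf t (Set.mem_Icc_of_Ioo ht))
  have hslope : (f b - f a) / (b - a) ≤ C := hc2 ▸ hg c hc
  have hba : (0:ℝ) < b - a := sub_pos.mpr hab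
  calc f b - f a = (f b - f a) / (b - a) * (b - a) := by field_simp
    _ ≤ C * (b - a) := by gcongr

/-- Barbalat-type lemma: if `φ' = -g ≤ 0`, `φ ≥ 0`, and `g` is `K`-Lipschitz on `[1,∞)`,
then `g → 0`. -/
lemma barbalat {φ g : ℝ → ℝ} {K : ℝ} (hK : 0 < K)
    (hg0 : ∀ t, 1 ≤ t → 0 ≤ g t)
    (hφ' : ∀ t, 1 ≤ t → HasDerivAt φ (-(g t)) t)
    (hφ0 : ∀ t, 1 ≤ t → 0 ≤ φ t)
    (hgL : ∀ a b, 1 ≤ a → a ≤ b → |g b - g a| ≤ K * (b - a)) :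
    Tendsto g atTop (nhds 0) := by
  rw [Metric.tendsto_atTop]
  intro δ hδ
  by_contra hcon
  push_neg at hcon
  -- frequently g t ≥ δ for t ≥ max N 1
  have hfreq : ∀ T : ℝ, ∃ t, T ≤ t ∧ 1 ≤ t ∧ δ ≤ g t := by
    intro T
    obtain ⟨t, ht, hgt⟩ := hcon (max T 1)
    refine ⟨t, le_trans (le_max_left _ _) ht, le_trans (le_max_right _ _) ht, ?_⟩
    have h0 := hg0 t (le_trans (le_max_right _ _) ht)
    rw [Real.dist_eq, sub_zero, abs_of_nonneg h0] at hgt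
    exact hgt
  set r : ℝ := δ / (2 * K) with hr
  have hrpos : 0 < r := div_pos hδ (by linarith)
  -- on [t, t+r], g ≥ δ/2 whenever g t ≥ δ
  have hstay : ∀ t s, 1 ≤ t → δ ≤ g t → t ≤ s → s ≤ t + r → δ / 2 ≤ g s := by
    intro t s ht hgt hts hsr
    have := hgL t s ht hts
    have h1 : g t - g s ≤ K * (s - t) := by
      have := abs_sub_comm (g s) (g t) ▸ this
      linarith [abs_le.mp this |>.2, neg_le_of_abs_le this]
    have h2 : K * (s - t) ≤ K * r := by gcongr; linarith
    have h3 : K * r = δ / 2 := by rw [hr]; field_simp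
    linarith
  -- φ is nonincreasing on [1,∞)
  have hmono : ∀ a b, 1 ≤ a → a ≤ b → φ b ≤ φ a := by
    intro a b ha hab
    rcases eq_or_lt_of_le hab with rfl | hab'
    · exact le_rfl
    have hs := slope_le hab' (fun t ht => hφ' t (le_trans ha ht.1))
      (fun t ht => neg_nonpos.mpr (hg0 t (le_trans ha (le_of_lt ht.1))))
    nlinarith [sub_pos.mpr hab']
  -- the decrement step
  have hdec : ∀ t, 1 ≤ t → δ ≤ g t → φ (t + r) ≤ φ t - δ / 2 * r := by
    intro t ht hgt
    have hlt : t < t + r := by linarith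
    have := slope_le (C := -(δ/2)) hlt (fun s hs => hφ' s (le_trans ht hs.1))
      (fun s hs => by
        have := hstay t s ht hgt (le_of_lt hs.1) (le_of_lt hs.2)
        linarith)
    nlinarith
  -- iterate: build sequence
  have key : ∀ n : ℕ, ∃ t, 1 ≤ t ∧ φ t ≤ φ 1 - n * (δ / 2 * r) := by
    intro n
    induction n with
    | zero => exact ⟨1, le_rfl, by simp⟩
    | succ n ih =>
      obtain ⟨t, ht1, htφ⟩ := ih
      obtain ⟨s, hs1, hs2, hs3⟩ := hfreq t
      have h4 := hdec s hs2 hs3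
      have h5 := hmono t s ht1 hs1
      refine ⟨s + r, by linarith, ?_⟩
      push_cast
      nlinarith
  obtain ⟨n, hn⟩ := exists_nat_gt ((φ 1) / (δ / 2 * r))
  obtain ⟨t, ht1, ht2⟩ := key n
  have hpos : 0 < δ / 2 * r := by positivity
  have := hφ0 t ht1
  nlinarith [(div_lt_iff₀ hpos).mp hn]




lemma rotAngle_transpose (A : Matrix (Fin 3) (Fin 3) ℝ) : rotAngle Aᵀ = rotAngle A := by
  simp [rotAngle]

lemma matLog_skew (A : Matrix (Fin 3) (Fin 3) ℝ) : (matLog A)ᵀ = -matLog A := by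
  unfold matLog
  split
  · simp
  · rw [transpose_smul, transpose_sub, transpose_transpose, ← smul_neg, neg_sub]

lemma matLog_transpose (A : Matrix (Fin 3) (Fin 3) ℝ) : matLog Aᵀ = -matLog A := by
  unfold matLog
  rw [rotAngle_transpose]
  split
  · simp
  · rw [transpose_transpose, ← smul_neg, neg_sub]

lemma rotAngle_conj {A O : Matrix (Fin 3) (Fin 3) ℝ} (hO : Oᵀ * O = 1) :
    rotAngle (Oᵀ * A * O) = rotAngle A := by
  have hO2 : O * Oᵀ = 1 := mul_eq_one_comm.mp hO
  have : trace (Oᵀ * A * O) = trace A := by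
    rw [Matrix.mul_assoc, Matrix.trace_mul_comm, Matrix.mul_assoc, hO2, Matrix.mul_one]
  simp [rotAngle, this]

lemma matLog_conj {A O : Matrix (Fin 3) (Fin 3) ℝ} (hO : Oᵀ * O = 1) :
    matLog (Oᵀ * A * O) = Oᵀ * matLog A * O := by
  have ht : (Oᵀ * A * O)ᵀ = Oᵀ * Aᵀ * O := by
    rw [transpose_mul, transpose_mul, transpose_transpose, Matrix.mul_assoc]
  unfold matLog
  rw [rotAngle_conj hO]
  split
  · simp
  · rw [ht, Matrix.mul_smul, Matrix.smul_mul, Matrix.mul_sub, Matrix.sub_mul]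

lemma trace_mul_skew {Q S : Matrix (Fin 3) (Fin 3) ℝ} (hS : Sᵀ = -S) :
    trace (Q * S) = trace ((Q - Qᵀ) * S) / 2 := by
  have h1 : trace (Qᵀ * S) = -trace (Q * S) := by
    calc trace (Qᵀ * S) = trace ((Qᵀ * S)ᵀ) := (trace_transpose _).symm
      _ = trace (Sᵀ * Q) := by rw [transpose_mul, transpose_transpose]
      _ = -trace (Q * S) := by rw [hS, Matrix.neg_mul, trace_neg, Matrix.trace_mul_comm]
  rw [Matrix.sub_mul, trace_sub, h1]; ring

-- angle facts
variable {Q : Matrix (Fin 3) (Fin 3) ℝ} {ε : ℝ}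

lemma rot_lt_one (h1 : 0 < rotAngle Q) : (trace Q - 1)/2 < 1 :=
  Real.arccos_pos.mp h1

lemma rot_gt_negone (h2 : rotAngle Q < π) : -1 < (trace Q - 1)/2 := by
  by_contra hc
  push_neg at hc
  have : rotAngle Q = π := Real.arccos_eq_pi.mpr hc
  linarith

lemma sin_rot : Real.sin (rotAngle Q) = √(1 - ((trace Q - 1)/2)^2) := Real.sin_arccos _

lemma cos_rot (h1 : 0 < rotAngle Q) (h2 : rotAngle Q < π) :
    Real.cos (rotAngle Q) = (trace Q - 1)/2 :=
  Real.cos_arccos (le_of_lt (rot_gt_negone h2)) (le_of_lt (rot_lt_one h1))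

lemma sin_rot_pos (h1 : 0 < rotAngle Q) (h2 : rotAngle Q < π) : 0 < Real.sin (rotAngle Q) := by
  rw [sin_rot]
  have ha := rot_lt_one h1
  have hb := rot_gt_negone h2
  have : ((trace Q - 1)/2)^2 < 1 := by nlinarith
  exact Real.sqrt_pos.mpr (by linarith)

lemma mul_cos_lt_sin {θ : ℝ} (h1 : 0 < θ) (h2 : θ < π/2) : θ * Real.cos θ < Real.sin θ := by
  have hcos : 0 < Real.cos θ := Real.cos_pos_of_mem_Ioo ⟨by linarith [Real.pi_pos], h2⟩
  have htan := Real.lt_tan h1 h2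
  rw [Real.tan_eq_sin_div_cos, lt_div_iff₀ hcos] at htan
  linarith

lemma sin_lb {θ ε : ℝ} (hε : 0 < ε) (h1 : 0 < θ) (h2 : θ ≤ π/2 - ε) :
    θ * Real.sin ε ≤ Real.sin θ := by
  have hθπ : θ < π/2 := by linarith
  have h3 := mul_cos_lt_sin h1 hθπ
  have h4 : Real.sin ε ≤ Real.cos θ := by
    have := Real.cos_le_cos_of_nonneg_of_le_pi (le_of_lt h1) (by linarith [Real.pi_pos]) h2
    rwa [Real.cos_pi_div_two_sub] at this
  nlinarith

lemma sin_rot_lb (hε : 0 < ε) (h1 : 0 < rotAngle Q) (h2 : rotAngle Q ≤ π/2 - ε) :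
    rotAngle Q * Real.sin ε ≤ Real.sin (rotAngle Q) := sin_lb hε h1 h2

lemma ratio_bound {θ ε : ℝ} (h1 : 0 < θ) (h2 : θ ≤ π/2 - ε) (hε : 0 < ε) :
    |(Real.sin θ - θ * Real.cos θ) / (2 * Real.sin θ^2)| ≤ π / (8 * Real.sin ε^2) := by
  have hπ := Real.pi_pos
  have hεπ : ε < π/2 := by linarith
  have hsε : 0 < Real.sin ε := Real.sin_pos_of_pos_of_lt_pi hε (by linarith)
  have hθπ : θ < π/2 := by linarith
  have hs : 0 < Real.sin θ := Real.sin_pos_of_pos_of_lt_pi h1 (by linarith)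
  have n1 : 0 ≤ Real.sin θ - θ * Real.cos θ := le_of_lt (by linarith [mul_cos_lt_sin h1 hθπ])
  have n2 : Real.sin θ - θ * Real.cos θ ≤ θ * (θ^2/2) := by
    have ha : Real.sin θ ≤ θ := Real.sin_le (le_of_lt h1)
    have hb : 1 - θ^2/2 ≤ Real.cos θ := Real.one_sub_sq_div_two_le_cos
    nlinarith
  have n3 : θ * Real.sin ε ≤ Real.sin θ := sin_lb hε h1 h2
  rw [abs_of_nonneg (by positivity)]
  rw [div_le_div_iff₀ (by positivity) (by positivity)]
  have hsq : θ^2 * Real.sin ε^2 ≤ Real.sin θ^2 := by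
    have := mul_le_mul n3 n3 (by positivity) (le_of_lt hs)
    nlinarith
  calc (Real.sin θ - θ * Real.cos θ) * (8 * Real.sin ε^2)
      ≤ (θ * (θ^2/2)) * (8 * Real.sin ε^2) := by
        exact mul_le_mul_of_nonneg_right n2 (by positivity)
    _ = 4*θ*(θ^2 * Real.sin ε^2) := by ring
    _ ≤ 4*θ*(Real.sin θ^2) := by
        exact mul_le_mul_of_nonneg_left hsq (by positivity)
    _ ≤ π * (2 * Real.sin θ^2) := by
        nlinarith [mul_le_mul_of_nonneg_right (show 4*θ ≤ 2*π by linarith)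
          (sq_nonneg (Real.sin θ))]

section Main

variable {V : Type*} [Fintype V]

def Nb (Adj : V → V → Prop) [DecidableRel Adj] (i : V) : Finset V :=
  Finset.univ.filter (fun j => Adj i j)

def Qm (Rtil : V → V → Matrix (Fin 3) (Fin 3) ℝ) (R : V → ℝ → Matrix (Fin 3) (Fin 3) ℝ)
    (i j : V) (t : ℝ) : Matrix (Fin 3) (Fin 3) ℝ :=
  (R i t)ᵀ * R j t * (Rtil i j)ᵀ

noncomputable def Um (Rtil : V → V → Matrix (Fin 3) (Fin 3) ℝ)
    (R : V → ℝ → Matrix (Fin 3) (Fin 3) ℝ) (i j : V) (t : ℝ) : Matrix (Fin 3) (Fin 3) ℝ :=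
  matLog (Qm Rtil R i j t)

noncomputable def Lm (Adj : V → V → Prop) [DecidableRel Adj]
    (Rtil : V → V → Matrix (Fin 3) (Fin 3) ℝ) (R : V → ℝ → Matrix (Fin 3) (Fin 3) ℝ)
    (i : V) (t : ℝ) : Matrix (Fin 3) (Fin 3) ℝ :=
  ∑ j ∈ Nb Adj i, Um Rtil R i j t

noncomputable def gm (Adj : V → V → Prop) [DecidableRel Adj]
    (Rtil : V → V → Matrix (Fin 3) (Fin 3) ℝ) (R : V → ℝ → Matrix (Fin 3) (Fin 3) ℝ)
    (t : ℝ) : ℝ :=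
  ∑ i, ∑ p, ∑ q, (Lm Adj Rtil R i t p q)^2

noncomputable def φm (Adj : V → V → Prop) [DecidableRel Adj]
    (Rtil : V → V → Matrix (Fin 3) (Fin 3) ℝ) (R : V → ℝ → Matrix (Fin 3) (Fin 3) ℝ)
    (t : ℝ) : ℝ :=
  ∑ i, ∑ j ∈ Nb Adj i, (rotAngle (Qm Rtil R i j t))^2 / 2

structure Setup (Adj : V → V → Prop) [DecidableRel Adj]
    (Rtil : V → V → Matrix (Fin 3) (Fin 3) ℝ) (R : V → ℝ → Matrix (Fin 3) (Fin 3) ℝ)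
    (ε : ℝ) : Prop where
  hsym : ∀ i j, Adj i j → Adj j i
  hRtilSO : ∀ i j, Adj i j → SO3 (Rtil i j)
  hpair : ∀ i j, Adj i j → Rtil j i = (Rtil i j)ᵀ
  hε : 0 < ε
  hεlt : ε < π/2
  hSO : ∀ i t, 0 ≤ t → SO3 (R i t)
  hang : ∀ i j, Adj i j → ∀ t, 0 ≤ t → rotAngle (Qm Rtil R i j t) ∈ Set.Ioc 0 (π/2 - ε)
  hdyn : ∀ i t, 0 ≤ t → HMD (R i) (R i t * Lm Adj Rtil R i t) t

variable {Adj : V → V → Prop} [DecidableRel Adj] {Rtil : V → V → Matrix (Fin 3) (Fin 3) ℝ}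
  {R : V → ℝ → Matrix (Fin 3) (Fin 3) ℝ} {ε : ℝ} {i j : V} {t : ℝ}

lemma Setup.so3Q (S : Setup Adj Rtil R ε) (hij : Adj i j) (ht : 0 ≤ t) :
    SO3 (Qm Rtil R i j t) :=
  so3_mul (so3_mul (so3_transpose (S.hSO i t ht)) (S.hSO j t ht))
    (so3_transpose (S.hRtilSO i j hij))

lemma Setup.θpos (S : Setup Adj Rtil R ε) (hij : Adj i j) (ht : 0 ≤ t) :
    0 < rotAngle (Qm Rtil R i j t) := (S.hang i j hij t ht).1

lemma Setup.θle (S : Setup Adj Rtil R ε) (hij : Adj i j) (ht : 0 ≤ t) :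
    rotAngle (Qm Rtil R i j t) ≤ π/2 - ε := (S.hang i j hij t ht).2

lemma Setup.θltpi (S : Setup Adj Rtil R ε) (hij : Adj i j) (ht : 0 ≤ t) :
    rotAngle (Qm Rtil R i j t) < π := by
  have := S.θle hij ht
  have := S.hε
  have := Real.pi_pos
  linarith

lemma Setup.sinpos (S : Setup Adj Rtil R ε) (hij : Adj i j) (ht : 0 ≤ t) :
    0 < Real.sin (rotAngle (Qm Rtil R i j t)) :=
  sin_rot_pos (S.θpos hij ht) (S.θltpi hij ht)

lemma Setup.Qswap (S : Setup Adj Rtil R ε) (hij : Adj i j) :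
    Qm Rtil R j i t = (Rtil i j)ᵀ * (Qm Rtil R i j t)ᵀ * Rtil i j := by
  have hO : (Rtil i j)ᵀ * Rtil i j = 1 := (S.hRtilSO i j hij).1
  have e1 : (Qm Rtil R i j t)ᵀ = Rtil i j * ((R j t)ᵀ * R i t) := by
    simp [Qm, transpose_mul, Matrix.mul_assoc]
  rw [e1, ← Matrix.mul_assoc, hO, Matrix.one_mul]
  simp [Qm, S.hpair i j hij, Matrix.mul_assoc]

lemma Setup.θswap (S : Setup Adj Rtil R ε) (hij : Adj i j) :
    rotAngle (Qm Rtil R j i t) = rotAngle (Qm Rtil R i j t) := by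
  rw [S.Qswap hij, rotAngle_conj (S.hRtilSO i j hij).1, rotAngle_transpose]

lemma Setup.Uswap (S : Setup Adj Rtil R ε) (hij : Adj i j) :
    Um Rtil R j i t = -((Rtil i j)ᵀ * Um Rtil R i j t * Rtil i j) := by
  unfold Um
  rw [S.Qswap hij, matLog_conj (S.hRtilSO i j hij).1, matLog_transpose]
  simp [Matrix.mul_neg, Matrix.neg_mul]

lemma skew_part_bound {Q : Matrix (Fin 3) (Fin 3) ℝ} (hQ : SO3 Q)
    (h1 : 0 < rotAngle Q) (h2 : rotAngle Q < π) :
    EB (Q - Qᵀ) (2*√2*Real.sin (rotAngle Q)) := by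
  intro p q
  have hc1 := rot_lt_one (Q := Q) h1
  have hc2 := rot_gt_negone (Q := Q) h2
  have hsq : Real.sin (rotAngle Q) ^ 2 = 1 - ((trace Q - 1)/2)^2 := by
    rw [sin_rot, Real.sq_sqrt (by nlinarith)]
  have htot := so3_skew_sq hQ
  have hb : ((Q - Qᵀ) p q)^2 ≤ 8 - 2 * (trace Q - 1)^2 := by
    rw [← htot]
    have step1 : ∑ q', ((Q - Qᵀ) p q')^2 ≤ ∑ p', ∑ q', ((Q - Qᵀ) p' q')^2 :=
      Finset.single_le_sum (f := fun p' => ∑ q', ((Q - Qᵀ) p' q')^2)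
        (fun _ _ => Finset.sum_nonneg fun _ _ => sq_nonneg _) (Finset.mem_univ p)
    have step2 : ((Q - Qᵀ) p q)^2 ≤ ∑ q', ((Q - Qᵀ) p q')^2 :=
      Finset.single_le_sum (f := fun q' => ((Q - Qᵀ) p q')^2)
        (fun _ _ => sq_nonneg _) (Finset.mem_univ q)
    linarith
  have hbb : ((Q - Qᵀ) p q)^2 ≤ (2*√2*Real.sin (rotAngle Q))^2 := by
    have : (2*√2*Real.sin (rotAngle Q))^2 = 8 * Real.sin (rotAngle Q)^2 := by
      rw [mul_pow, mul_pow, Real.sq_sqrt (by norm_num : (0:ℝ) ≤ 2)]; ring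
    rw [this, hsq]; nlinarith
  have hpos : 0 ≤ 2*√2*Real.sin (rotAngle Q) := by
    have := sin_rot_pos h1 h2
    positivity
  calc |(Q - Qᵀ) p q| = √(((Q - Qᵀ) p q)^2) := (Real.sqrt_sq_eq_abs _).symm
    _ ≤ √((2*√2*Real.sin (rotAngle Q))^2) := Real.sqrt_le_sqrt hbb
    _ = 2*√2*Real.sin (rotAngle Q) := Real.sqrt_sq hpos

lemma matLog_eq {Q : Matrix (Fin 3) (Fin 3) ℝ} (hne : rotAngle Q ≠ 0) :
    matLog Q = (rotAngle Q/(2*Real.sin (rotAngle Q))) • (Q - Qᵀ) := if_neg hne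

lemma skew_decomp {Q : Matrix (Fin 3) (Fin 3) ℝ} (h1 : 0 < rotAngle Q)
    (hs : 0 < Real.sin (rotAngle Q)) :
    Q - Qᵀ = ((2*Real.sin (rotAngle Q))/rotAngle Q) • matLog Q := by
  rw [matLog_eq (ne_of_gt h1), smul_smul]
  rw [div_mul_div_comm]
  rw [show (2*Real.sin (rotAngle Q)) * rotAngle Q / (rotAngle Q * (2*Real.sin (rotAngle Q))) = 1 by
    rw [mul_comm]; field_simp]
  rw [one_smul]

lemma matLog_EB {Q : Matrix (Fin 3) (Fin 3) ℝ} (hQ : SO3 Q)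
    (h1 : 0 < rotAngle Q) (h2 : rotAngle Q < π) :
    EB (matLog Q) (√2 * rotAngle Q) := by
  have hs := sin_rot_pos h1 h2
  rw [matLog_eq (ne_of_gt h1)]
  have := EB.smul (rotAngle Q/(2*Real.sin (rotAngle Q))) (skew_part_bound hQ h1 h2)
  refine this.mono (le_of_eq ?_)
  rw [abs_of_nonneg (by positivity)]
  field_simp

noncomputable def UBc : ℝ := √2 * (π/2)
noncomputable def LBc (n : ℕ) : ℝ := n * UBc

lemma UBc_nonneg : 0 ≤ UBc := by
  have := Real.pi_pos
  unfold UBc; positivity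

lemma LBc_nonneg (n : ℕ) : 0 ≤ LBc n :=
  mul_nonneg (Nat.cast_nonneg n) UBc_nonneg

lemma Setup.EB_U (S : Setup Adj Rtil R ε) (hij : Adj i j) (ht : 0 ≤ t) :
    EB (Um Rtil R i j t) (√2 * rotAngle (Qm Rtil R i j t)) :=
  matLog_EB (S.so3Q hij ht) (S.θpos hij ht) (S.θltpi hij ht)

lemma Setup.EB_U' (S : Setup Adj Rtil R ε) (hij : Adj i j) (ht : 0 ≤ t) :
    EB (Um Rtil R i j t) UBc := by
  refine (S.EB_U hij ht).mono ?_
  have h1 := S.θle hij ht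
  have h2 := S.hε
  unfold UBc
  have : rotAngle (Qm Rtil R i j t) ≤ π/2 := by linarith
  exact mul_le_mul_of_nonneg_left this (Real.sqrt_nonneg 2)

lemma Setup.EB_L (S : Setup Adj Rtil R ε) (ht : 0 ≤ t) (i : V) :
    EB (Lm Adj Rtil R i t) (LBc (Fintype.card V)) := by
  have h := EB.sum (Nb Adj i) (fun j => Um Rtil R i j t) UBc_nonneg
    (fun j hj => S.EB_U' (by simpa [Nb] using hj) ht)
  refine h.mono ?_
  unfold LBc
  have : ((Nb Adj i).card : ℝ) ≤ (Fintype.card V : ℝ) := by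
    exact_mod_cast (Finset.card_filter_le _ _).trans (le_of_eq (Finset.card_univ))
  exact mul_le_mul_of_nonneg_right this UBc_nonneg

lemma Lskew (i : V) (t : ℝ) : (Lm Adj Rtil R i t)ᵀ = -(Lm Adj Rtil R i t) := by
  unfold Lm
  rw [Matrix.transpose_sum]
  rw [← Finset.sum_neg_distrib]
  exact Finset.sum_congr rfl fun j _ => matLog_skew _

lemma Mskew (i j : V) (t : ℝ) :
    (Rtil i j * Lm Adj Rtil R j t * (Rtil i j)ᵀ)ᵀ = -(Rtil i j * Lm Adj Rtil R j t * (Rtil i j)ᵀ) := by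
  rw [transpose_mul, transpose_mul, transpose_transpose, Lskew]
  simp [Matrix.mul_neg, Matrix.neg_mul, Matrix.mul_assoc]

lemma Setup.EB_M (S : Setup Adj Rtil R ε) (hij : Adj i j) (ht : 0 ≤ t) :
    EB (Rtil i j * Lm Adj Rtil R j t * (Rtil i j)ᵀ) (9 * LBc (Fintype.card V)) := by
  have h1 : EB (Rtil i j) 1 := so3_entry (S.hRtilSO i j hij)
  have h2 : EB ((Rtil i j)ᵀ) 1 := h1.transpose
  have := (h1.mul (S.EB_L ht j)).mul h2
  refine this.mono (le_of_eq ?_)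
  ring

lemma Setup.HMD_Q (S : Setup Adj Rtil R ε) (hij : Adj i j) (ht : 0 ≤ t) :
    HMD (Qm Rtil R i j)
      (-(Lm Adj Rtil R i t) * Qm Rtil R i j t
        + Qm Rtil R i j t * (Rtil i j * Lm Adj Rtil R j t * (Rtil i j)ᵀ)) t := by
  have hRi := S.hdyn i t ht
  have hRj := S.hdyn j t ht
  have h2 := (hRi.transpose.mul hRj).mul_const ((Rtil i j)ᵀ)
  have key : ((R i t * Lm Adj Rtil R i t)ᵀ * R j t + (R i t)ᵀ * (R j t * Lm Adj Rtil R j t))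
        * (Rtil i j)ᵀ
      = -(Lm Adj Rtil R i t) * Qm Rtil R i j t
        + Qm Rtil R i j t * (Rtil i j * Lm Adj Rtil R j t * (Rtil i j)ᵀ) := by
    have hO : (Rtil i j)ᵀ * Rtil i j = 1 := (S.hRtilSO i j hij).1
    rw [transpose_mul, Lskew]
    simp only [Qm, Matrix.add_mul, Matrix.neg_mul, Matrix.mul_neg, Matrix.mul_assoc]
    congr 1
    rw [← Matrix.mul_assoc ((Rtil i j)ᵀ) (Rtil i j), hO, Matrix.one_mul]
  rw [key] at h2
  exact h2

lemma Setup.traceQd (S : Setup Adj Rtil R ε) (hij : Adj i j) (ht : 0 ≤ t) :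
    trace (-(Lm Adj Rtil R i t) * Qm Rtil R i j t
        + Qm Rtil R i j t * (Rtil i j * Lm Adj Rtil R j t * (Rtil i j)ᵀ))
      = -(Real.sin (rotAngle (Qm Rtil R i j t)) / rotAngle (Qm Rtil R i j t))
        * (trace (Um Rtil R i j t * Lm Adj Rtil R i t)
           + trace (Um Rtil R j i t * Lm Adj Rtil R j t)) := by
  set Q := Qm Rtil R i j t with hQdef
  set U := Um Rtil R i j t with hUdef
  set Li := Lm Adj Rtil R i t
  set Lj := Lm Adj Rtil R j t
  set O := Rtil i j
  set θv := rotAngle Q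
  set sv := Real.sin θv
  have hθ0 := S.θpos hij ht
  have hs0 := S.sinpos hij ht
  have hdecomp : Q - Qᵀ = ((2*sv)/θv) • U := skew_decomp hθ0 hs0
  have htr1 : trace (Q * Li) = (sv/θv) * trace (U * Li) := by
    rw [trace_mul_skew (Lskew i t), hdecomp, Matrix.smul_mul, trace_smul, smul_eq_mul]
    ring
  have htr2 : trace (Q * (O * Lj * Oᵀ)) = (sv/θv) * trace (U * (O * Lj * Oᵀ)) := by
    rw [trace_mul_skew (Mskew i j t), hdecomp, Matrix.smul_mul, trace_smul, smul_eq_mul]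
    ring
  have htr3 : trace (Um Rtil R j i t * Lj) = -trace (U * (O * Lj * Oᵀ)) := by
    rw [S.Uswap hij]
    rw [Matrix.neg_mul, trace_neg]
    congr 1
    rw [Matrix.mul_assoc, Matrix.mul_assoc, Matrix.trace_mul_comm, Matrix.mul_assoc,
      Matrix.mul_assoc]
  rw [trace_add, Matrix.neg_mul, trace_neg, Matrix.trace_mul_comm Li Q, htr1, htr2, htr3]
  ring

lemma Setup.hθd (S : Setup Adj Rtil R ε) (hij : Adj i j) (ht : 0 ≤ t) :
    HasDerivAt (fun s => rotAngle (Qm Rtil R i j s))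
      ((trace (Um Rtil R i j t * Lm Adj Rtil R i t)
        + trace (Um Rtil R j i t * Lm Adj Rtil R j t)) / (2 * rotAngle (Qm Rtil R i j t))) t := by
  have hθ0 := S.θpos hij ht
  have hπ := S.θltpi hij ht
  have hs0 := S.sinpos hij ht
  have hc1 := rot_lt_one (Q := Qm Rtil R i j t) hθ0
  have hc2 := rot_gt_negone (Q := Qm Rtil R i j t) hπ
  have hcd : HasDerivAt (fun s => (trace (Qm Rtil R i j s) - 1)/2)
      (trace (-(Lm Adj Rtil R i t) * Qm Rtil R i j t
        + Qm Rtil R i j t * (Rtil i j * Lm Adj Rtil R j t * (Rtil i j)ᵀ)) / 2) t :=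
    (((S.HMD_Q hij ht).trace).sub_const 1).div_const 2
  have harc := Real.hasDerivAt_arccos (ne_of_gt hc2) (ne_of_lt hc1)
  have hcomp := harc.comp t hcd
  have : (fun s => rotAngle (Qm Rtil R i j s))
      = (fun s => Real.arccos ((trace (Qm Rtil R i j s) - 1)/2)) := rfl
  rw [this]
  refine hcomp.congr_deriv ?_
  rw [S.traceQd hij ht]
  have hsin : √(1 - ((trace (Qm Rtil R i j t) - 1)/2)^2) = Real.sin (rotAngle (Qm Rtil R i j t)) :=
    (sin_rot).symm
  rw [hsin]
  have h1 := (S.θpos hij ht).ne'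
  have h2 := (S.sinpos hij ht).ne'
  field_simp
  try ring
  try exact Or.inl trivial

lemma sum_swap_adj (hsym : ∀ i j, Adj i j → Adj j i) (F : V → V → ℝ) :
    ∑ i, ∑ j ∈ Nb Adj i, F j i = ∑ i, ∑ j ∈ Nb Adj i, F i j := by
  simp only [Nb, Finset.sum_filter]
  rw [Finset.sum_comm]
  refine Finset.sum_congr rfl fun a _ => Finset.sum_congr rfl fun b _ => ?_
  have hiff : Adj b a ↔ Adj a b := ⟨hsym b a, hsym a b⟩
  exact if_congr hiff rfl rfl

lemma skew_trace_sq {L : Matrix (Fin 3) (Fin 3) ℝ} (h : Lᵀ = -L) :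
    trace (L * L) = -∑ p, ∑ q, (L p q)^2 := by
  have he : ∀ p q : Fin 3, L q p = -(L p q) := fun p q => by
    have := congr_fun (congr_fun h p) q
    simpa [Matrix.transpose_apply, Matrix.neg_apply] using this
  have hd : ∀ p : Fin 3, L p p = 0 := fun p => by have := he p p; linarith
  simp only [Matrix.trace, Matrix.mul_apply, Matrix.diag, Fin.sum_univ_three]
  rw [hd 0, hd 1, hd 2, he 0 1, he 0 2, he 1 2]
  ring

noncomputable def Cθc (n : ℕ) : ℝ := 9 * (√2 * (π/2) * LBc n) * 2

lemma Setup.θd_bound (S : Setup Adj Rtil R ε) (hij : Adj i j) (ht : 0 ≤ t) :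
    |(trace (Um Rtil R i j t * Lm Adj Rtil R i t)
        + trace (Um Rtil R j i t * Lm Adj Rtil R j t)) / (2 * rotAngle (Qm Rtil R i j t))|
      ≤ Cθc (Fintype.card V) := by
  set θv := rotAngle (Qm Rtil R i j t) with hθv
  have hθ0 := S.θpos hij ht
  have hθle := S.θle hij ht
  have hji := S.hsym i j hij
  have hT1 : |trace (Um Rtil R i j t * Lm Adj Rtil R i t)|
      ≤ 9 * ((√2 * θv) * LBc (Fintype.card V)) :=
    trace_abs_le (S.EB_U hij ht) (S.EB_L ht i)
  have hT2 : |trace (Um Rtil R j i t * Lm Adj Rtil R j t)|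
      ≤ 9 * ((√2 * θv) * LBc (Fintype.card V)) := by
    have := trace_abs_le (S.EB_U hji ht) (S.EB_L ht j)
    rwa [S.θswap hij] at this
  have habs : |(trace (Um Rtil R i j t * Lm Adj Rtil R i t)
      + trace (Um Rtil R j i t * Lm Adj Rtil R j t))|
      ≤ 2 * (9 * ((√2 * θv) * LBc (Fintype.card V))) := by
    calc _ ≤ _ := abs_add_le _ _
      _ ≤ 2 * (9 * ((√2 * θv) * LBc (Fintype.card V))) := by linarith
  rw [abs_div, abs_of_pos (by positivity : (0:ℝ) < 2 * θv)]
  rw [div_le_iff₀ (by positivity)]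
  calc |trace (Um Rtil R i j t * Lm Adj Rtil R i t)
      + trace (Um Rtil R j i t * Lm Adj Rtil R j t)|
      ≤ 2 * (9 * ((√2 * θv) * LBc (Fintype.card V))) := habs
    _ = (9 * (√2 * LBc (Fintype.card V)) * 2) * θv := by ring
    _ ≤ Cθc (Fintype.card V) * (2 * θv) := by
        unfold Cθc
        have hL := LBc_nonneg (Fintype.card V)
        nlinarith [Real.sqrt_nonneg 2, Real.pi_gt_three, mul_nonneg (Real.sqrt_nonneg 2) hL,
          mul_nonneg (mul_nonneg (Real.sqrt_nonneg 2) hL) (le_of_lt hθ0)]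

lemma Setup.hφd (S : Setup Adj Rtil R ε) (ht : 0 ≤ t) :
    HasDerivAt (φm Adj Rtil R) (-(gm Adj Rtil R t)) t := by
  have hedge : ∀ i j, Adj i j → HasDerivAt (fun s => rotAngle (Qm Rtil R i j s)^2 / 2)
      ((trace (Um Rtil R i j t * Lm Adj Rtil R i t)
        + trace (Um Rtil R j i t * Lm Adj Rtil R j t)) / 2) t := by
    intro i j hij
    have h := ((S.hθd hij ht).pow 2).div_const 2
    refine h.congr_deriv ?_
    have hθ0 := (S.θpos hij ht).ne'
    field_simp
    try ring
  have hsum : HasDerivAt (φm Adj Rtil R)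
      (∑ i, ∑ j ∈ Nb Adj i, (trace (Um Rtil R i j t * Lm Adj Rtil R i t)
        + trace (Um Rtil R j i t * Lm Adj Rtil R j t)) / 2) t := by
    unfold φm
    exact HasDerivAt.fun_sum fun i _ => HasDerivAt.fun_sum fun j hj =>
      hedge i j (by simpa [Nb] using hj)
  convert hsum using 1
  have hsplit : ∑ i, ∑ j ∈ Nb Adj i, (trace (Um Rtil R i j t * Lm Adj Rtil R i t)
        + trace (Um Rtil R j i t * Lm Adj Rtil R j t)) / 2
      = ((∑ i, ∑ j ∈ Nb Adj i, trace (Um Rtil R i j t * Lm Adj Rtil R i t))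
        + (∑ i, ∑ j ∈ Nb Adj i, trace (Um Rtil R j i t * Lm Adj Rtil R j t))) / 2 := by
    simp only [← Finset.sum_div, Finset.sum_add_distrib]
  rw [hsplit,
    sum_swap_adj S.hsym (fun a b => trace (Um Rtil R a b t * Lm Adj Rtil R a t))]
  have hX : ∀ i, ∑ j ∈ Nb Adj i, trace (Um Rtil R i j t * Lm Adj Rtil R i t)
      = trace (Lm Adj Rtil R i t * Lm Adj Rtil R i t) := fun i => by
    rw [← Matrix.trace_sum, ← Finset.sum_mul]
    rfl
  simp only [hX]
  have hG : ∑ i, trace (Lm Adj Rtil R i t * Lm Adj Rtil R i t) = -(gm Adj Rtil R t) := by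
    unfold gm
    rw [← Finset.sum_neg_distrib]
    exact Finset.sum_congr rfl fun i _ => skew_trace_sq (Lskew i t)
  rw [hG]
  ring

noncomputable def QdBc (n : ℕ) : ℝ := 30 * LBc n
noncomputable def ηdBc (n : ℕ) (ε : ℝ) : ℝ := Cθc n * (π/(8 * Real.sin ε^2))
noncomputable def CUc (n : ℕ) (ε : ℝ) : ℝ :=
  ηdBc n ε * (2*√2) + (1/(2*Real.sin ε)) * (2 * QdBc n)
noncomputable def Kc (n : ℕ) (ε : ℝ) : ℝ :=
  |(n:ℝ) * (18 * (LBc n * (n * CUc n ε)))| + 1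

lemma Cθc_nonneg (n : ℕ) : 0 ≤ Cθc n := by
  have := LBc_nonneg n
  have := Real.pi_pos
  unfold Cθc
  positivity

lemma Setup.EB_Qd (S : Setup Adj Rtil R ε) (hij : Adj i j) (ht : 0 ≤ t) :
    EB (-(Lm Adj Rtil R i t) * Qm Rtil R i j t
        + Qm Rtil R i j t * (Rtil i j * Lm Adj Rtil R j t * (Rtil i j)ᵀ))
      (QdBc (Fintype.card V)) := by
  have hQ : EB (Qm Rtil R i j t) 1 := so3_entry (S.so3Q hij ht)
  have h1 := ((S.EB_L ht i).neg.mul hQ).add (hQ.mul (S.EB_M hij ht))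
  refine h1.mono (le_of_eq ?_)
  unfold QdBc
  ring

lemma Setup.sinlb (S : Setup Adj Rtil R ε) (hij : Adj i j) (ht : 0 ≤ t) :
    rotAngle (Qm Rtil R i j t) * Real.sin ε ≤ Real.sin (rotAngle (Qm Rtil R i j t)) :=
  sin_lb S.hε (S.θpos hij ht) (S.θle hij ht)

lemma Setup.sinε_pos (S : Setup Adj Rtil R ε) : 0 < Real.sin ε :=
  Real.sin_pos_of_pos_of_lt_pi S.hε (by linarith [S.hεlt, Real.pi_pos])

lemma Setup.η_bound (S : Setup Adj Rtil R ε) (hij : Adj i j) (ht : 0 ≤ t) :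
    rotAngle (Qm Rtil R i j t) / (2 * Real.sin (rotAngle (Qm Rtil R i j t)))
      ≤ 1/(2*Real.sin ε) := by
  have hθ0 := S.θpos hij ht
  have hs0 := S.sinpos hij ht
  have hsε := S.sinε_pos
  have hlb := S.sinlb hij ht
  rw [div_le_div_iff₀ (by positivity) (by positivity)]
  nlinarith

lemma Setup.U_deriv (S : Setup Adj Rtil R ε) (hij : Adj i j) (htpos : 0 < t) :
    ∃ U', HMD (Um Rtil R i j) U' t ∧ EB U' (CUc (Fintype.card V) ε) := by
  have ht := le_of_lt htpos
  have hθ0 := S.θpos hij ht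
  have hπ := S.θltpi hij ht
  have hs0 := S.sinpos hij ht
  have hsε := S.sinε_pos
  have hθd := S.hθd hij ht
  set Dθ := (trace (Um Rtil R i j t * Lm Adj Rtil R i t)
    + trace (Um Rtil R j i t * Lm Adj Rtil R j t)) / (2 * rotAngle (Qm Rtil R i j t)) with hDθ
  have hsd : HasDerivAt (fun s => Real.sin (rotAngle (Qm Rtil R i j s)))
      (Real.cos (rotAngle (Qm Rtil R i j t)) * Dθ) t :=
    (Real.hasDerivAt_sin _).comp t hθd
  have h2s := hsd.const_mul 2
  have hden : 2 * Real.sin (rotAngle (Qm Rtil R i j t)) ≠ 0 := by positivity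
  have hηd := hθd.div h2s hden
  set ηd := (Dθ * (2 * Real.sin (rotAngle (Qm Rtil R i j t)))
      - rotAngle (Qm Rtil R i j t) * (2 * (Real.cos (rotAngle (Qm Rtil R i j t)) * Dθ)))
      / (2 * Real.sin (rotAngle (Qm Rtil R i j t)))^2 with hηddef
  have hQd := S.HMD_Q hij ht
  set Qd := -(Lm Adj Rtil R i t) * Qm Rtil R i j t
      + Qm Rtil R i j t * (Rtil i j * Lm Adj Rtil R j t * (Rtil i j)ᵀ) with hQddef
  have hbase : HMD (fun s => (rotAngle (Qm Rtil R i j s)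
        / (2 * Real.sin (rotAngle (Qm Rtil R i j s)))) • (Qm Rtil R i j s - (Qm Rtil R i j s)ᵀ))
      (ηd • (Qm Rtil R i j t - (Qm Rtil R i j t)ᵀ)
        + (rotAngle (Qm Rtil R i j t) / (2 * Real.sin (rotAngle (Qm Rtil R i j t))))
            • (Qd - Qdᵀ)) t :=
    HMD.smul hηd (hQd.sub hQd.transpose)
  refine ⟨ηd • (Qm Rtil R i j t - (Qm Rtil R i j t)ᵀ)
      + (rotAngle (Qm Rtil R i j t) / (2 * Real.sin (rotAngle (Qm Rtil R i j t))))
        • (Qd - Qdᵀ), fun p q => ?_, ?_⟩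
  · refine (hbase p q).congr_of_eventuallyEq ?_
    have hev : ∀ᶠ s in nhds t, s ∈ Set.Ioi (0:ℝ) := isOpen_Ioi.eventually_mem htpos
    refine hev.mono fun s hs => ?_
    have : Um Rtil R i j s = (rotAngle (Qm Rtil R i j s)
        / (2 * Real.sin (rotAngle (Qm Rtil R i j s)))) • (Qm Rtil R i j s - (Qm Rtil R i j s)ᵀ) := by
      unfold Um
      exact matLog_eq (ne_of_gt (S.θpos hij (le_of_lt hs)))
    exact congrFun (congrFun this p) q
  · -- entry bound
    have hηdb : |ηd| ≤ ηdBc (Fintype.card V) ε := by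
      have he : ηd = Dθ * ((Real.sin (rotAngle (Qm Rtil R i j t))
          - rotAngle (Qm Rtil R i j t) * Real.cos (rotAngle (Qm Rtil R i j t)))
          / (2 * Real.sin (rotAngle (Qm Rtil R i j t))^2)) := by
        rw [hηddef]
        field_simp
      rw [he, abs_mul]
      unfold ηdBc
      exact mul_le_mul (S.θd_bound hij ht)
        (ratio_bound hθ0 (S.θle hij ht) S.hε) (abs_nonneg _) (Cθc_nonneg _)
    have hb1 : EB (ηd • (Qm Rtil R i j t - (Qm Rtil R i j t)ᵀ)) (ηdBc (Fintype.card V) ε * (2*√2)) := by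
      refine (EB.smul ηd (skew_part_bound (S.so3Q hij ht) hθ0 hπ)).mono ?_
      have hsle : Real.sin (rotAngle (Qm Rtil R i j t)) ≤ 1 := Real.sin_le_one _
      calc |ηd| * (2*√2*Real.sin (rotAngle (Qm Rtil R i j t)))
          ≤ ηdBc (Fintype.card V) ε * (2*√2*1) := by
            refine mul_le_mul hηdb ?_ (by positivity) ?_
            · nlinarith [Real.sqrt_nonneg 2]
            · exact le_trans (abs_nonneg _) hηdb
        _ = ηdBc (Fintype.card V) ε * (2*√2) := by ring
    have hb2 : EB ((rotAngle (Qm Rtil R i j t) / (2 * Real.sin (rotAngle (Qm Rtil R i j t))))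
        • (Qd - Qdᵀ)) ((1/(2*Real.sin ε)) * (QdBc (Fintype.card V) + QdBc (Fintype.card V))) := by
      have hQdb := S.EB_Qd hij ht
      rw [← hQddef] at hQdb
      refine (EB.smul _ (hQdb.sub hQdb.transpose)).mono ?_
      refine mul_le_mul ?_ le_rfl ?_ (by positivity)
      · rw [abs_of_nonneg (by positivity)]
        exact S.η_bound hij ht
      · have := (hQdb.sub hQdb.transpose).nonneg
        linarith
    refine (hb1.add hb2).mono (le_of_eq ?_)
    unfold CUc
    ring

lemma Setup.CUc_nonneg (S : Setup Adj Rtil R ε) : 0 ≤ CUc (Fintype.card V) ε := by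
  have h1 := Cθc_nonneg (Fintype.card V)
  have h2 := LBc_nonneg (Fintype.card V)
  have h3 := S.sinε_pos
  have h4 := Real.pi_pos
  unfold CUc ηdBc QdBc
  positivity

lemma Setup.L_deriv (S : Setup Adj Rtil R ε) (htpos : 0 < t) (i : V) :
    ∃ L', HMD (Lm Adj Rtil R i) L' t ∧ EB L' ((Fintype.card V) * CUc (Fintype.card V) ε) := by
  have h : ∀ j, j ∈ Nb Adj i → ∃ U', HMD (Um Rtil R i j) U' t ∧ EB U' (CUc (Fintype.card V) ε) :=
    fun j hj => S.U_deriv (by simpa [Nb] using hj) htpos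
  choose! U' h1 h2 using h
  have hCU : 0 ≤ CUc (Fintype.card V) ε := S.CUc_nonneg
  refine ⟨∑ j ∈ Nb Adj i, U' j, ?_, ?_⟩
  · have := HMD.sum (s := Nb Adj i) (fun j hj => h1 j hj)
    exact this
  · refine (EB.sum _ _ hCU h2).mono ?_
    have : ((Nb Adj i).card : ℝ) ≤ (Fintype.card V : ℝ) := by
      exact_mod_cast (Finset.card_filter_le _ _).trans (le_of_eq (Finset.card_univ))
    exact mul_le_mul_of_nonneg_right this hCU

lemma Setup.g_deriv (S : Setup Adj Rtil R ε) (htpos : 0 < t) :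
    ∃ d, HasDerivAt (gm Adj Rtil R) d t ∧ |d| ≤ Kc (Fintype.card V) ε := by
  choose! L' h1 h2 using fun i => S.L_deriv htpos i
  set n := Fintype.card V
  set b := (n : ℝ) * CUc n ε with hbdef
  have hb0 : 0 ≤ b := mul_nonneg (Nat.cast_nonneg n) S.CUc_nonneg
  have hL0 := LBc_nonneg n
  refine ⟨∑ i, ∑ p, ∑ q, 2 * Lm Adj Rtil R i t p q ^ 1 * L' i p q, ?_, ?_⟩
  · unfold gm
    exact HasDerivAt.fun_sum fun i _ => HasDerivAt.fun_sum fun p _ => HasDerivAt.fun_sum fun q _ =>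
      by simpa using (h1 i p q).fun_pow 2
  · have hterm : ∀ i (p q : Fin 3), |2 * Lm Adj Rtil R i t p q ^ 1 * L' i p q|
        ≤ 2 * (LBc n * b) := by
      intro i p q
      rw [abs_mul, abs_mul, pow_one]
      have e1 := S.EB_L (le_of_lt htpos) i p q
      have e2 := h2 i p q
      calc |(2:ℝ)| * |Lm Adj Rtil R i t p q| * |L' i p q|
          ≤ 2 * LBc n * b := by
            rw [abs_two]
            exact mul_le_mul (mul_le_mul le_rfl e1 (abs_nonneg _) (by norm_num)) e2
              (abs_nonneg _) (by positivity)
        _ = 2 * (LBc n * b) := by ring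
    have habs : |∑ i, ∑ p, ∑ q, 2 * Lm Adj Rtil R i t p q ^ 1 * L' i p q|
        ≤ (n : ℝ) * (9 * (2 * (LBc n * b))) := by
      calc |∑ i, ∑ p, ∑ q, 2 * Lm Adj Rtil R i t p q ^ 1 * L' i p q|
          ≤ ∑ i, |∑ p, ∑ q : Fin 3, 2 * Lm Adj Rtil R i t p q ^ 1 * L' i p q| :=
            Finset.abs_sum_le_sum_abs _ _
        _ ≤ ∑ _i : V, (9 : ℝ) * (2 * (LBc n * b)) := by
            refine Finset.sum_le_sum fun i _ => ?_
            calc |∑ p, ∑ q : Fin 3, 2 * Lm Adj Rtil R i t p q ^ 1 * L' i p q|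
                ≤ ∑ p : Fin 3, |∑ q : Fin 3, 2 * Lm Adj Rtil R i t p q ^ 1 * L' i p q| :=
                  Finset.abs_sum_le_sum_abs _ _
              _ ≤ ∑ p : Fin 3, ∑ q : Fin 3, |2 * Lm Adj Rtil R i t p q ^ 1 * L' i p q| :=
                  Finset.sum_le_sum fun p _ => Finset.abs_sum_le_sum_abs _ _
              _ ≤ ∑ _p : Fin 3, ∑ _q : Fin 3, 2 * (LBc n * b) :=
                  Finset.sum_le_sum fun p _ => Finset.sum_le_sum fun q _ => hterm i p q
              _ = (9:ℝ) * (2 * (LBc n * b)) := by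
                  simp [Fin.sum_univ_three]; ring
        _ = (n : ℝ) * (9 * (2 * (LBc n * b))) := by
            rw [Finset.sum_const, nsmul_eq_mul, Finset.card_univ]
    refine le_trans habs ?_
    unfold Kc
    rw [hbdef]
    calc (n:ℝ) * (9 * (2 * (LBc n * ((n:ℝ) * CUc n ε))))
        = (n:ℝ) * (18 * (LBc n * ((n:ℝ) * CUc n ε))) := by ring
      _ ≤ |(n:ℝ) * (18 * (LBc n * ((n:ℝ) * CUc n ε)))| := le_abs_self _
      _ ≤ |(n:ℝ) * (18 * (LBc n * ((n:ℝ) * CUc n ε)))| + 1 := by linarith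

lemma gm_nonneg (t : ℝ) : 0 ≤ gm Adj Rtil R t :=
  Finset.sum_nonneg fun i _ => Finset.sum_nonneg fun p _ => Finset.sum_nonneg fun q _ =>
    sq_nonneg _

lemma φm_nonneg (t : ℝ) : 0 ≤ φm Adj Rtil R t :=
  Finset.sum_nonneg fun i _ => Finset.sum_nonneg fun j _ =>
    div_nonneg (sq_nonneg _) (by norm_num)

lemma Setup.gtendsto (S : Setup Adj Rtil R ε) :
    Tendsto (gm Adj Rtil R) atTop (nhds 0) := by
  have hKpos : 0 < Kc (Fintype.card V) ε := by
    unfold Kc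
    positivity
  choose! gd h1 h2 using fun (u : ℝ) (h : (0:ℝ) < u) => S.g_deriv h
  refine barbalat hKpos (fun u _ => gm_nonneg u) (fun u hu => S.hφd (by linarith))
    (fun u _ => φm_nonneg u) ?_
  intro a b ha hab
  rcases eq_or_lt_of_le hab with rfl | hab'
  · simp
  have hder : ∀ u ∈ Set.Icc a b, HasDerivAt (gm Adj Rtil R) (gd u) u :=
    fun u hu => h1 u (by linarith [hu.1])
  have hbd : ∀ u ∈ Set.Icc a b, |gd u| ≤ Kc (Fintype.card V) ε :=
    fun u hu => h2 u (by linarith [hu.1])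
  rw [abs_le]
  constructor
  · have := slope_le (C := Kc (Fintype.card V) ε) hab'
      (fun u hu => (hder u hu).fun_neg)
      (fun u hu => by
        have := hbd u (Set.mem_Icc_of_Ioo hu)
        have := neg_le_of_abs_le this
        linarith)
    linarith
  · exact slope_le hab' hder
      (fun u hu => le_of_abs_le (hbd u (Set.mem_Icc_of_Ioo hu)))

lemma vee_sum {ι : Type*} (s : Finset ι) (A : ι → Matrix (Fin 3) (Fin 3) ℝ) :
    ∑ j ∈ s, vee (A j) = vee (∑ j ∈ s, A j) := by
  classical
  induction s using Finset.induction_on with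
  | empty =>
      simp only [Finset.sum_empty, vee]
      ext p
      fin_cases p <;> simp
  | insert _ _ h ih =>
      rw [Finset.sum_insert h, Finset.sum_insert h, ih]
      ext p
      fin_cases p <;>
        simp [vee, Matrix.add_apply] <;> rfl

lemma vee_norm_le (i : V) (t : ℝ) :
    ‖vee (Lm Adj Rtil R i t)‖ ≤ √(gm Adj Rtil R t) := by
  set L := Lm Adj Rtil R i t with hL
  have hnorm : ‖vee L‖ = √((L 2 1)^2 + ((L 0 2)^2 + ((L 1 0)^2 + 0))) := by
    rw [EuclideanSpace.norm_eq]
    congr 1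
    simp [vee, Fin.sum_univ_three, sq_abs]
    ring
  rw [hnorm]
  apply Real.sqrt_le_sqrt
  have hsub : (L 2 1)^2 + ((L 0 2)^2 + ((L 1 0)^2 + 0)) ≤ ∑ p, ∑ q, (L p q)^2 := by
    simp only [Fin.sum_univ_three]
    nlinarith [sq_nonneg (L 0 0), sq_nonneg (L 0 1), sq_nonneg (L 1 1), sq_nonneg (L 1 2),
      sq_nonneg (L 2 0), sq_nonneg (L 2 2)]
  refine hsub.trans ?_
  unfold gm
  rw [hL]
  exact Finset.single_le_sum
    (f := fun i' => ∑ p, ∑ q, (Lm Adj Rtil R i' t p q)^2)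
    (fun i' _ => Finset.sum_nonneg fun p _ => Finset.sum_nonneg fun q _ => sq_nonneg _)
    (Finset.mem_univ i)

end Main
end GeoD
/-- (Rotation estimation convergence.) Under pairwise consistent measurements, relative
geodesic errors staying in `(0, π/2 − ε]`, and the GeoD rotation dynamics on `[0, ∞)`,
each rotational control `ω_i(t) = Σ_{j∼i} (Log(Rᵢ(t)ᵀ Rⱼ(t) R̃(i,j)ᵀ))^∨` tends to `0`
as `t → ∞`. -/
theorem geoD_rotation_convergence {V : Type*} [Fintype V]
    (Adj : V → V → Prop) [DecidableRel Adj] (hsym : ∀ i j, Adj i j → Adj j i)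
    (Rtil : V → V → Matrix (Fin 3) (Fin 3) ℝ)
    (hRtilSO : ∀ i j, Adj i j → SO3 (Rtil i j))
    (hpair : ∀ i j, Adj i j → Rtil j i = (Rtil i j)ᵀ)
    (ε : ℝ) (hε : 0 < ε)
    (R : V → ℝ → Matrix (Fin 3) (Fin 3) ℝ)
    (hSO : ∀ i t, 0 ≤ t → SO3 (R i t))
    (hθ : ∀ i j, Adj i j → ∀ t, 0 ≤ t →
      rotAngle ((R i t)ᵀ * R j t * (Rtil i j)ᵀ) ∈ Set.Ioc 0 (π / 2 - ε))
    (hdyn : ∀ i t, 0 ≤ t → ∀ p q, HasDerivAt (fun s => R i s p q)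
      ((R i t * ∑ j ∈ Finset.univ.filter (fun j => Adj i j),
          matLog ((R i t)ᵀ * R j t * (Rtil i j)ᵀ)) p q) t) :
    ∀ i, Tendsto
      (fun t => ∑ j ∈ Finset.univ.filter (fun j => Adj i j),
        vee (matLog ((R i t)ᵀ * R j t * (Rtil i j)ᵀ)))
      atTop (nhds 0) := by
  intro i
  by_cases hedge : ∃ a b, Adj a b
  · obtain ⟨a, b, hab⟩ := hedge
    have hεlt : ε < π / 2 := by
      have h := hθ a b hab 0 le_rfl
      have := h.1
      have := h.2
      linarith
    have S : GeoD.Setup Adj Rtil R ε :=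
      ⟨hsym, hRtilSO, hpair, hε, hεlt, hSO,
        fun i j hij t ht => hθ i j hij t ht,
        fun i t ht => hdyn i t ht⟩
    have hg := S.gtendsto
    have hsq : Tendsto (fun t => √(GeoD.gm Adj Rtil R t)) atTop (nhds 0) := by
      have hc : Tendsto Real.sqrt (nhds 0) (nhds 0) := by
        have := Real.continuous_sqrt.tendsto 0
        simpa using this
      exact hc.comp hg
    refine squeeze_zero_norm (fun t => ?_) hsq
    have he : (∑ j ∈ Finset.univ.filter (fun j => Adj i j),
        vee (matLog ((R i t)ᵀ * R j t * (Rtil i j)ᵀ)))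
        = vee (GeoD.Lm Adj Rtil R i t) := by
      rw [GeoD.vee_sum]
      rfl
    rw [he]
    exact GeoD.vee_norm_le i t
  · push_neg at hedge
    have hf : Finset.univ.filter (fun j => Adj i j) = ∅ :=
      Finset.filter_false_of_mem (fun j _ => hedge i j)
    simp only [hf, Finset.sum_empty]
    exact tendsto_const_nhds
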